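/- arXiv:2001.11109 — 7 statements merged into one kernel-verified Lean document; each statement's English description precedes it below -/
import Mathlib

section
/- For α > 0 and k = k₀ := (α+1)·α^(−α/(α+1)), the equation z^(α+1) − k·z^α + 1 = 0 has exactly one solution z in (0,∞), namely z₀ = kα/(α+1) = α^(1/(α+1)). -/
theorem stmt_2 (α k : ℝ) (hα : 0 < α)
    (hk : k = (α + 1) * α ^ (-(α / (α + 1)))) :
    k * α / (α + 1) = α ^ (1 / (α + 1)) ∧
    ∀ z : ℝ, 0 < z →
      (z ^ (α + 1) - k * z ^ α + 1 = 0 ↔ z = k * α / (α + 1)) := by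
  have hα1 : (0:ℝ) < α + 1 := by linarith
  have hα1' : α + 1 ≠ 0 := ne_of_gt hα1
  set z₀ : ℝ := α ^ (1 / (α + 1)) with hz₀def
  have hz₀pos : 0 < z₀ := Real.rpow_pos_of_pos hα _
  have hz₀pow : z₀ ^ (α + 1) = α := by
    rw [hz₀def, ← Real.rpow_mul hα.le, one_div, inv_mul_cancel₀ hα1', Real.rpow_one]
  have hexp : -(α / (α + 1)) + 1 = 1 / (α + 1) := by field_simp; ring
  have hz₀eq : z₀ = α ^ (-(α / (α + 1))) * α := by
    rw [hz₀def, ← hexp, Real.rpow_add hα, Real.rpow_one]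
  have part1 : k * α / (α + 1) = z₀ := by
    rw [hk, hz₀eq]; field_simp
  have hk2 : k = (α + 1) * z₀ / α := by
    rw [hk, hz₀eq]; field_simp
  -- Bernoulli: strict positivity of u^(α+1) - (α+1)u + α for u ≠ 1
  have bern : ∀ u : ℝ, 0 < u → u ≠ 1 → 0 < u ^ (α + 1) - (α + 1) * u + α := by
    intro u hu hu1
    have hb := one_add_mul_self_lt_rpow_one_add (s := u - 1) (by linarith)
      (by intro h; apply hu1; linarith) (p := α + 1) (by linarith)
    have h2 : (1 + (u - 1)) = u := by ring
    rw [h2] at hb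
    nlinarith [hb]
  refine ⟨part1, fun z hz => ?_⟩
  have hzα : (0:ℝ) < z ^ α := Real.rpow_pos_of_pos hz _
  have hzα1 : (0:ℝ) < z ^ (α + 1) := Real.rpow_pos_of_pos hz _
  have hz1 : z ^ (α + 1) = z ^ α * z := by rw [Real.rpow_add hz, Real.rpow_one]
  have hdiv : (z₀ / z) ^ (α + 1) = α / z ^ (α + 1) := by
    rw [Real.div_rpow hz₀pos.le hz.le, hz₀pow]
  have key : α * (z ^ (α + 1) - k * z ^ α + 1)
      = z ^ (α + 1) * ((z₀ / z) ^ (α + 1) - (α + 1) * (z₀ / z) + α) := by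
    rw [hdiv, hk2, hz1]
    field_simp
    ring
  constructor
  · intro h0
    have hkey0 : z ^ (α + 1) * ((z₀ / z) ^ (α + 1) - (α + 1) * (z₀ / z) + α) = 0 := by
      rw [← key, h0, mul_zero]
    have h1 : (z₀ / z) ^ (α + 1) - (α + 1) * (z₀ / z) + α = 0 := by
      rcases mul_eq_zero.mp hkey0 with h | h
      · exact absurd h (ne_of_gt hzα1)
      · exact h
    have hu : z₀ / z = 1 := by
      by_contra hne
      have := bern (z₀ / z) (div_pos hz₀pos hz) hne
      linarith
    have : z = z₀ := by
      field_simp at hu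
      linarith [hu]
    rw [this, part1]
  · intro hzeq
    have hzz : z = z₀ := by rw [hzeq, part1]
    have hone : z₀ / z = 1 := by rw [hzz]; field_simp
    have h1 : (z₀ / z) ^ (α + 1) - (α + 1) * (z₀ / z) + α = 0 := by
      rw [hone, Real.one_rpow]; ring
    have := key
    rw [h1, mul_zero] at this
    have hα' : α ≠ 0 := ne_of_gt hα
    exact (mul_eq_zero.mp this).resolve_left hα'
end

section
/- For α > 0 and any k ∈ ℝ, the equation z^(α+1) − k·z^α − 1 = 0 has exactly one solution z in (0,∞). -/
open Real Set

theorem stmt_3 (α k : ℝ) (hα : 0 < α) :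
    ∃! z : ℝ, 0 < z ∧ z ^ (α + 1) - k * z ^ α - 1 = 0 := by
  set f : ℝ → ℝ := fun z => z - z ^ (-α) with hf
  -- equivalence
  have key : ∀ z : ℝ, 0 < z → (z ^ (α + 1) - k * z ^ α - 1 = 0 ↔ f z = k) := by
    intro z hz
    have h1 : z ^ (α + 1) = z ^ α * z := by
      rw [Real.rpow_add hz, Real.rpow_one]
    have h2 : z ^ α * z ^ (-α) = 1 := by
      rw [← Real.rpow_add hz]; simp
    have hpos : 0 < z ^ α := Real.rpow_pos_of_pos hz α
    constructor
    · intro h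
      have : z ^ α * (z - z ^ (-α) - k) = 0 := by
        rw [mul_sub, mul_sub, h2]; nlinarith [h, h1]
      have := (mul_eq_zero.mp this).resolve_left (ne_of_gt hpos)
      simp only [hf]; linarith
    · intro h
      simp only [hf] at h
      nlinarith [h1, h2]
  have hmono : StrictMonoOn f (Ioi (0:ℝ)) := by
    intro x hx y hy hxy
    have : y ^ (-α) < x ^ (-α) :=
      Real.rpow_lt_rpow_of_neg hx hxy (by linarith)
    simp only [hf]
    linarith
  -- endpoints
  set b : ℝ := max 1 (k + 1) with hb
  have hb1 : (1:ℝ) ≤ b := le_max_left _ _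
  have hbk : k + 1 ≤ b := le_max_right _ _
  have hfb : k ≤ f b := by
    have : b ^ (-α) ≤ 1 := by
      calc b ^ (-α) ≤ b ^ (0:ℝ) :=
        Real.rpow_le_rpow_of_exponent_le hb1 (by linarith)
      _ = 1 := Real.rpow_zero b
    simp only [hf]; linarith
  set c : ℝ := max 1 (1 - k) with hc
  have hc1 : (1:ℝ) ≤ c := le_max_left _ _
  have hck : 1 - k ≤ c := le_max_right _ _
  set a : ℝ := c ^ (-(1/α)) with ha
  have hcpos : (0:ℝ) < c := by linarith
  have hapos : 0 < a := Real.rpow_pos_of_pos hcpos _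
  have haα : a ^ (-α) = c := by
    rw [ha, ← Real.rpow_mul hcpos.le, show -(1/α) * -α = 1 by field_simp]
    exact Real.rpow_one c
  have ha1 : a ≤ 1 := by
    calc a = c ^ (-(1/α)) := rfl
    _ ≤ c ^ (0:ℝ) := Real.rpow_le_rpow_of_exponent_le hc1 (neg_nonpos.mpr (by positivity))
    _ = 1 := Real.rpow_zero c
  have hfa : f a ≤ k := by
    simp only [hf]; rw [haα]; linarith
  have hab : a ≤ b := le_trans ha1 hb1
  -- continuity
  have hcont : ContinuousOn f (Icc a b) := by
    apply ContinuousOn.sub continuousOn_id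
    intro x hx
    exact (Real.continuousAt_rpow_const x (-α)
      (Or.inl (ne_of_gt (lt_of_lt_of_le hapos hx.1)))).continuousWithinAt
  obtain ⟨z, hz, hfz⟩ := intermediate_value_Icc hab hcont ⟨hfa, hfb⟩
  have hzpos : 0 < z := lt_of_lt_of_le hapos hz.1
  refine ⟨z, ⟨hzpos, (key z hzpos).mpr hfz⟩, ?_⟩
  rintro y ⟨hypos, hy⟩
  have hfy : f y = k := (key y hypos).mp hy
  exact hmono.injOn hypos hzpos (by rw [hfy, hfz])
end

section
/- Let α > 0 and k > k₀ := (α+1)·α^(−α/(α+1)), and let z₁ ≤ z₂ be the two positive roots of z^(α+1) − k·z^α + 1 = 0. Then the sequence defined by a₀ = k and a_{n+1} = k − a_n^(−α) is decreasing, bounded below by z₂, and converges to z₂. -/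
open Filter Set

theorem stmt_7 (α k z₂ : ℝ) (hα : 0 < α)
    (hk : (α + 1) * α ^ (-(α / (α + 1))) < k)
    (hz₂pos : 0 < z₂) (hz₂root : z₂ ^ (α + 1) - k * z₂ ^ α + 1 = 0)
    (hz₂max : ∀ z : ℝ, 0 < z → z ^ (α + 1) - k * z ^ α + 1 = 0 → z ≤ z₂)
    (a : ℕ → ℝ) (ha0 : a 0 = k) (ha : ∀ n, a (n + 1) = k - (a n) ^ (-α)) :
    (∀ n, a (n + 1) ≤ a n) ∧ (∀ n, z₂ ≤ a n) ∧
      Filter.Tendsto a Filter.atTop (nhds z₂) := by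
  have hα1 : (0:ℝ) < α + 1 := by linarith
  set s : ℝ := α ^ ((α + 1)⁻¹) with hs
  have hspos : 0 < s := Real.rpow_pos_of_pos hα _
  have hsp : s ^ (α + 1) = α := by
    rw [hs, ← Real.rpow_mul hα.le, inv_mul_cancel₀ hα1.ne', Real.rpow_one]
  -- root equation ↔ fixed point equation
  have hroot_iff : ∀ z : ℝ, 0 < z →
      (z ^ (α + 1) - k * z ^ α + 1 = 0 ↔ z + z ^ (-α) = k) := by
    intro z hz
    have hzα : (0:ℝ) < z ^ α := Real.rpow_pos_of_pos hz α
    rw [Real.rpow_add hz, Real.rpow_one, Real.rpow_neg hz.le]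
    constructor
    · intro h
      field_simp
      nlinarith
    · intro h
      field_simp at h
      nlinarith
  -- g s = k₀
  have hsneg : s ^ (-α) = α ^ (-(α / (α + 1))) := by
    rw [hs, ← Real.rpow_mul hα.le]
    congr 1
    field_simp
  have hgs : s + s ^ (-α) = (α + 1) * α ^ (-(α / (α + 1))) := by
    have h1 : s = α * α ^ (-(α / (α + 1))) := by
      rw [hs]
      symm
      nth_rewrite 1 [show α = α ^ (1:ℝ) from (Real.rpow_one α).symm]
      rw [← Real.rpow_add hα]
      congr 1
      field_simp
      ring
    rw [hsneg, h1]; ring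
  -- g is monotone on Ici s
  have hg_mono : MonotoneOn (fun z : ℝ => z + z ^ (-α)) (Set.Ici s) := by
    apply monotoneOn_of_deriv_nonneg (convex_Ici s)
    · apply ContinuousOn.add continuousOn_id
      intro x hx
      have hx0 : 0 < x := lt_of_lt_of_le hspos hx
      exact (Real.continuousAt_rpow_const x _ (Or.inl hx0.ne')).continuousWithinAt
    · intro x hx
      rw [interior_Ici] at hx
      have hx0 : 0 < x := hspos.trans hx
      exact ((hasDerivAt_id x).add
        (Real.hasDerivAt_rpow_const (Or.inl hx0.ne'))).differentiableAt.differentiableWithinAt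
    · intro x hx
      rw [interior_Ici] at hx
      have hx0 : 0 < x := hspos.trans hx
      have hd : HasDerivAt (fun z : ℝ => z + z ^ (-α)) (1 + (-α) * x ^ (-α - 1)) x :=
        (hasDerivAt_id x).add (Real.hasDerivAt_rpow_const (Or.inl hx0.ne'))
      rw [hd.deriv]
      have h1 : α < x ^ (α + 1) := by
        have := Real.rpow_lt_rpow hspos.le hx hα1
        rwa [hsp] at this
      have h2 : x ^ (-α - 1) = (x ^ (α + 1))⁻¹ := by
        rw [← Real.rpow_neg hx0.le]; ring_nf
      have hxp : (0:ℝ) < x ^ (α + 1) := Real.rpow_pos_of_pos hx0 _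
      rw [h2]
      have : α * (x ^ (α + 1))⁻¹ < 1 := by
        rw [mul_inv_lt_iff₀ hxp]; linarith
      linarith
  -- IVT: there's a root ≥ s, hence z₂ ≥ s
  have hz₂s : s ≤ z₂ := by
    set M : ℝ := max k s with hM
    have hsM : s ≤ M := le_max_right _ _
    have hcont : ContinuousOn (fun z : ℝ => z + z ^ (-α)) (Set.Icc s M) := by
      apply ContinuousOn.add continuousOn_id
      intro x hx
      have hx0 : 0 < x := lt_of_lt_of_le hspos hx.1
      exact (Real.continuousAt_rpow_const x _ (Or.inl hx0.ne')).continuousWithinAt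
    have hmem : k ∈ Set.Icc ((fun z : ℝ => z + z ^ (-α)) s)
        ((fun z : ℝ => z + z ^ (-α)) M) := by
      constructor
      · simp only [hgs]; exact hk.le
      · have hM0 : 0 < M := hspos.trans_le hsM
        have : (0:ℝ) < M ^ (-α) := Real.rpow_pos_of_pos hM0 _
        have hkM : k ≤ M := le_max_left _ _
        simp only []
        nlinarith
    obtain ⟨c, hc, hgc⟩ := intermediate_value_Icc hsM hcont hmem
    have hc0 : 0 < c := lt_of_lt_of_le hspos hc.1
    have := hz₂max c hc0 ((hroot_iff c hc0).2 hgc)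
    linarith [hc.1]
  have hz₂k : z₂ + z₂ ^ (-α) = k := (hroot_iff z₂ hz₂pos).1 hz₂root
  have hz₂neg : (0:ℝ) < z₂ ^ (-α) := Real.rpow_pos_of_pos hz₂pos _
  -- lower bound
  have hlb : ∀ n, z₂ ≤ a n := by
    intro n
    induction n with
    | zero => rw [ha0]; linarith
    | succ n ih =>
      have hx0 : 0 < a n := hz₂pos.trans_le ih
      have : (a n) ^ (-α) ≤ z₂ ^ (-α) :=
        Real.rpow_le_rpow_of_nonpos hz₂pos ih (by linarith)
      rw [ha n]; linarith
  -- decreasing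
  have hdec : ∀ n, a (n + 1) ≤ a n := by
    intro n
    have h1 : z₂ ≤ a n := hlb n
    have h2 : (fun z : ℝ => z + z ^ (-α)) z₂ ≤ (fun z : ℝ => z + z ^ (-α)) (a n) :=
      hg_mono hz₂s (le_trans hz₂s h1) h1
    simp only [hz₂k] at h2
    rw [ha n]; linarith
  refine ⟨hdec, hlb, ?_⟩
  -- convergence
  have hanti : Antitone a := antitone_nat_of_succ_le hdec
  have hbdd : BddBelow (Set.range a) := ⟨z₂, by rintro _ ⟨n, rfl⟩; exact hlb n⟩
  have htend : Tendsto a atTop (nhds (⨅ n, a n)) := tendsto_atTop_ciInf hanti hbdd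
  set L : ℝ := ⨅ n, a n with hL
  have hLz : z₂ ≤ L := le_ciInf hlb
  have hL0 : 0 < L := hz₂pos.trans_le hLz
  have h1 : Tendsto (fun n => a (n + 1)) atTop (nhds L) :=
    htend.comp (Filter.tendsto_add_atTop_nat 1)
  have h2 : Tendsto (fun n => k - (a n) ^ (-α)) atTop (nhds (k - L ^ (-α))) := by
    apply Tendsto.const_sub
    exact ((Real.continuousAt_rpow_const L (-α) (Or.inl hL0.ne')).tendsto).comp htend
  have heq : L = k - L ^ (-α) := by
    apply tendsto_nhds_unique h1
    simpa only [ha] using h2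
  have hLroot : L ^ (α + 1) - k * L ^ α + 1 = 0 := (hroot_iff L hL0).2 (by linarith)
  have : L = z₂ := le_antisymm (hz₂max L hL0 hLroot) hLz
  rwa [this] at htend
end

section
/- Let α > 0, τ > 0, f₁, f continuous on [0,τ) with f(0) > f₁(0), f − f₁ nondecreasing on [0,τ), and g, g₁ ∈ L¹_loc with g ≥ g₁ a.e. on (0,τ). Suppose x, x₁ : [0,τ) → (0,∞) are continuous with x(t) = f(t) + ∫₀ᵗ g(s)/x(s)^α ds and x₁(t) = f₁(t) + ∫₀ᵗ g₁(s)/x₁(s)^α ds for all t ∈ [0,τ), where both integrands are locally integrable on (0,τ). Then x(t) > x₁(t) for all t ∈ [0,τ). -/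
open MeasureTheory intervalIntegral

lemma aux_lip {α m a b : ℝ} (hα : 0 < α) (hm : 0 < m) (ha : m ≤ a) (hb : m ≤ b) :
    |a ^ (-α) - b ^ (-α)| ≤ α * m ^ (-α - 1) * |a - b| := by
  have key := (convex_Ici m).norm_image_sub_le_of_norm_hasDerivWithin_le
      (f := fun y : ℝ => y ^ (-α)) (f' := fun y : ℝ => (-α) * y ^ (-α - 1))
      (fun u hu => (Real.hasDerivAt_rpow_const (p := -α)
        (Or.inl (ne_of_gt (lt_of_lt_of_le hm hu)))).hasDerivWithinAt)
      (fun u hu => by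
        rw [Real.norm_eq_abs, abs_mul, abs_neg, abs_of_pos hα,
          abs_of_pos (Real.rpow_pos_of_pos (lt_of_lt_of_le hm hu) _)]
        exact mul_le_mul_of_nonneg_left
          (Real.rpow_le_rpow_of_nonpos hm hu (by linarith)) hα.le)
      hb ha
  simpa [Real.norm_eq_abs] using key

theorem stmt_13 (α τ : ℝ) (hα : 0 < α) (hτ : 0 < τ)
    (f f₁ g g₁ x x₁ : ℝ → ℝ)
    (hf : ContinuousOn f (Set.Ico 0 τ)) (hf₁ : ContinuousOn f₁ (Set.Ico 0 τ))
    (hf0 : f₁ 0 < f 0)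
    (hmono : MonotoneOn (fun t => f t - f₁ t) (Set.Ico 0 τ))
    (hg : ∀ᵐ s ∂(volume : Measure ℝ), s ∈ Set.Ioo 0 τ → g₁ s ≤ g s)
    (hx : ContinuousOn x (Set.Ico 0 τ)) (hx₁ : ContinuousOn x₁ (Set.Ico 0 τ))
    (hxpos : ∀ t ∈ Set.Ico (0:ℝ) τ, 0 < x t)
    (hx₁pos : ∀ t ∈ Set.Ico (0:ℝ) τ, 0 < x₁ t)
    (hint : ∀ t ∈ Set.Ico (0:ℝ) τ,
      IntervalIntegrable (fun s => g s / x s ^ α) volume 0 t)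
    (hint₁ : ∀ t ∈ Set.Ico (0:ℝ) τ,
      IntervalIntegrable (fun s => g₁ s / x₁ s ^ α) volume 0 t)
    (heq : ∀ t ∈ Set.Ico (0:ℝ) τ,
      x t = f t + ∫ s in (0:ℝ)..t, g s / x s ^ α)
    (heq₁ : ∀ t ∈ Set.Ico (0:ℝ) τ,
      x₁ t = f₁ t + ∫ s in (0:ℝ)..t, g₁ s / x₁ s ^ α) :
    ∀ t ∈ Set.Ico (0:ℝ) τ, x₁ t < x t := by
  by_contra hcon
  push_neg at hcon
  obtain ⟨t₀, ht₀, hle⟩ := hcon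
  set z : ℝ → ℝ := fun t => x t - x₁ t with hzdef
  have hsub₀ : Set.Icc (0:ℝ) t₀ ⊆ Set.Ico 0 τ :=
    fun s hs => ⟨hs.1, lt_of_le_of_lt hs.2 ht₀.2⟩
  have hzc : ContinuousOn z (Set.Ico 0 τ) := hx.sub hx₁
  set S : Set ℝ := Set.Icc 0 t₀ ∩ z ⁻¹' Set.Iic 0 with hSdef
  have hS_closed : IsClosed S :=
    (hzc.mono hsub₀).preimage_isClosed_of_isClosed isClosed_Icc isClosed_Iic
  have hSne : S.Nonempty := ⟨t₀, ⟨ht₀.1, le_rfl⟩, by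
    simp only [Set.mem_preimage, Set.mem_Iic]
    show x t₀ - x₁ t₀ ≤ 0
    linarith⟩
  have hSbdd : BddBelow S := ⟨0, fun s hs => hs.1.1⟩
  set T := sInf S with hTdef
  have hTS : T ∈ S := hS_closed.csInf_mem hSne hSbdd
  have hT0 : 0 ≤ T := hTS.1.1
  have hTt₀ : T ≤ t₀ := hTS.1.2
  have hTτ : T < τ := lt_of_le_of_lt hTt₀ ht₀.2
  have hTmem : T ∈ Set.Ico (0:ℝ) τ := ⟨hT0, hTτ⟩
  have hzT : z T ≤ 0 := hTS.2
  have hx0 : x 0 = f 0 := by simpa using heq 0 ⟨le_rfl, hτ⟩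
  have hx₁0 : x₁ 0 = f₁ 0 := by simpa using heq₁ 0 ⟨le_rfl, hτ⟩
  have hz0 : 0 < z 0 := by
    show 0 < x 0 - x₁ 0
    rw [hx0, hx₁0]; linarith
  have hTpos : 0 < T := by
    rcases lt_or_eq_of_le hT0 with h | h
    · exact h
    · exfalso; rw [← h] at hzT; linarith
  have hzpos : ∀ s, 0 ≤ s → s < T → 0 < z s := by
    intro s hs0 hsT
    by_contra hns
    push_neg at hns
    have hsS : s ∈ S := ⟨⟨hs0, hsT.le.trans hTt₀⟩, hns⟩
    exact absurd (csInf_le hSbdd hsS) (not_le.mpr hsT)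
  have hsubT : Set.Icc (0:ℝ) T ⊆ Set.Ico 0 τ :=
    fun s hs => ⟨hs.1, lt_of_le_of_lt hs.2 hTτ⟩
  haveI : (nhdsWithin T (Set.Ico 0 T)).NeBot := right_nhdsWithin_Ico_neBot hTpos
  have hzT0 : 0 ≤ z T := by
    have hc : Filter.Tendsto z (nhdsWithin T (Set.Ico 0 T)) (nhds (z T)) :=
      ((hzc T hTmem).mono (fun s hs => ⟨hs.1, lt_of_lt_of_le hs.2 hTτ.le⟩))
    refine ge_of_tendsto hc ?_
    filter_upwards [self_mem_nhdsWithin] with s hs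
    exact (hzpos s hs.1 hs.2).le
  have hz_nonneg : ∀ s ∈ Set.Icc (0:ℝ) T, 0 ≤ z s := by
    intro s hs
    rcases lt_or_eq_of_le hs.2 with h | h
    · exact (hzpos s hs.1 h).le
    · rw [h]; exact hzT0
  -- positive lower bound for x and x₁ on [0, T]
  obtain ⟨p, hp, hpmin⟩ := isCompact_Icc.exists_isMinOn (Set.nonempty_Icc.mpr hT0)
    (hx.mono hsubT)
  obtain ⟨q, hq, hqmin⟩ := isCompact_Icc.exists_isMinOn (Set.nonempty_Icc.mpr hT0)
    (hx₁.mono hsubT)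
  set m := min (x p) (x₁ q) with hmdef
  have hmpos : 0 < m := lt_min (hxpos p (hsubT hp)) (hx₁pos q (hsubT hq))
  have hmx : ∀ s ∈ Set.Icc (0:ℝ) T, m ≤ x s :=
    fun s hs => (min_le_left _ _).trans (hpmin hs)
  have hmx₁ : ∀ s ∈ Set.Icc (0:ℝ) T, m ≤ x₁ s :=
    fun s hs => (min_le_right _ _).trans (hqmin hs)
  set C := α * m ^ (-α - 1) with hCdef
  have hC : 0 ≤ C := by positivity
  -- g₁ is interval integrable on [0, T]
  have hxαc : ContinuousOn (fun s => x₁ s ^ α) (Set.uIcc 0 T) := by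
    rw [Set.uIcc_of_le hT0]
    exact (hx₁.mono hsubT).rpow_const (fun s _ => Or.inr hα.le)
  have hg₁int : IntervalIntegrable g₁ volume 0 T := by
    refine ((hint₁ T hTmem).mul_continuousOn hxαc).congr_ae ?_
    refine (ae_restrict_mem (measurableSet_uIoc : MeasurableSet (Set.uIoc (0:ℝ) T))).mono ?_
    intro s hs
    rw [Set.uIoc_of_le hT0] at hs
    have hx₁s : 0 < x₁ s := hx₁pos s ⟨hs.1.le, lt_of_le_of_lt hs.2 hTτ⟩
    have : x₁ s ^ α ≠ 0 := ne_of_gt (Real.rpow_pos_of_pos hx₁s α)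
    field_simp
  have habs : IntervalIntegrable (fun s => |g₁ s|) volume 0 T := hg₁int.abs
  have habsOn : IntegrableOn (fun s => |g₁ s|) (Set.uIcc 0 T) volume := by
    rw [Set.uIcc_of_le hT0, integrableOn_Icc_iff_integrableOn_Ioc]
    exact (intervalIntegrable_iff_integrableOn_Ioc_of_le hT0).mp habs
  -- choose t₁ close to T with small tail integral of |g₁|
  have hucont : ContinuousOn (fun t => ∫ s in t..T, |g₁ s|) (Set.uIcc 0 T) :=
    continuousOn_primitive_interval_left habsOn
  have hulim : Filter.Tendsto (fun t => ∫ s in t..T, |g₁ s|)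
      (nhdsWithin T (Set.Ico 0 T)) (nhds 0) := by
    have hss : Set.Ico (0:ℝ) T ⊆ Set.uIcc 0 T := by
      rw [Set.uIcc_of_le hT0]; exact Set.Ico_subset_Icc_self
    have h1 : ContinuousWithinAt (fun t => ∫ s in t..T, |g₁ s|) (Set.uIcc 0 T) T := by
      refine hucont T ?_
      rw [Set.uIcc_of_le hT0]; exact ⟨hT0, le_rfl⟩
    have h2 : ContinuousWithinAt (fun t => ∫ s in t..T, |g₁ s|) (Set.Ico 0 T) T :=
      h1.mono hss
    have hTT : (∫ s in T..T, |g₁ s|) = (0:ℝ) := integral_same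
    simpa [ContinuousWithinAt, hTT] using h2
  set ε := 1 / (2 * (C + 1)) with hεdef
  have hεpos : 0 < ε := by positivity
  have hev : ∀ᶠ t in nhdsWithin T (Set.Ico 0 T), (∫ s in t..T, |g₁ s|) < ε :=
    hulim.eventually_lt_const hεpos
  obtain ⟨t₁, ht₁ε, ht₁mem⟩ := (hev.and self_mem_nhdsWithin).exists
  -- maximum of z on [t₁, T]
  have hsubt₁ : Set.Icc t₁ T ⊆ Set.Ico 0 τ :=
    fun s hs => ⟨ht₁mem.1.trans hs.1, lt_of_le_of_lt hs.2 hTτ⟩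
  have hsubt₁' : Set.Icc t₁ T ⊆ Set.Icc 0 T := fun s hs => ⟨ht₁mem.1.trans hs.1, hs.2⟩
  obtain ⟨c, hcmem, hcmax⟩ := isCompact_Icc.exists_isMaxOn
    (Set.nonempty_Icc.mpr ht₁mem.2.le) (hzc.mono hsubt₁)
  have hc0 : 0 ≤ c := ht₁mem.1.trans hcmem.1
  have hcT : c ≤ T := hcmem.2
  have hcτ : c ∈ Set.Ico (0:ℝ) τ := ⟨hc0, lt_of_le_of_lt hcT hTτ⟩
  have hMpos : 0 < z c :=
    lt_of_lt_of_le (hzpos t₁ ht₁mem.1 ht₁mem.2) (hcmax ⟨le_rfl, ht₁mem.2.le⟩)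
  -- integrabilities on [c, T]
  have hsubIcc : Set.uIcc c T ⊆ Set.uIcc 0 T := by
    rw [Set.uIcc_of_le hcT, Set.uIcc_of_le hT0]
    exact Set.Icc_subset_Icc hc0 le_rfl
  have hIx : IntervalIntegrable (fun s => g s / x s ^ α) volume c T :=
    (hint T hTmem).mono_set hsubIcc
  have hIx₁ : IntervalIntegrable (fun s => g₁ s / x₁ s ^ α) volume c T :=
    (hint₁ T hTmem).mono_set hsubIcc
  have habs_ct : IntervalIntegrable (fun s => |g₁ s|) volume c T := habs.mono_set hsubIcc
  have habs_tc : IntervalIntegrable (fun s => |g₁ s|) volume t₁ c := by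
    refine habs.mono_set ?_
    rw [Set.uIcc_of_le hcmem.1, Set.uIcc_of_le hT0]
    exact Set.Icc_subset_Icc ht₁mem.1 hcT
  -- the basic inequality z c ≤ ∫_c^T (g₁/x₁^α - g/x^α)
  have hadj : (∫ s in (0:ℝ)..c, g s / x s ^ α) + (∫ s in c..T, g s / x s ^ α)
      = ∫ s in (0:ℝ)..T, g s / x s ^ α :=
    integral_add_adjacent_intervals (hint c hcτ) hIx
  have hadj₁ : (∫ s in (0:ℝ)..c, g₁ s / x₁ s ^ α) + (∫ s in c..T, g₁ s / x₁ s ^ α)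
      = ∫ s in (0:ℝ)..T, g₁ s / x₁ s ^ α :=
    integral_add_adjacent_intervals (hint₁ c hcτ) hIx₁
  have hFmono : f c - f₁ c ≤ f T - f₁ T := hmono hcτ hTmem hcT
  have key1 : z c ≤ (∫ s in c..T, g₁ s / x₁ s ^ α) - ∫ s in c..T, g s / x s ^ α := by
    have hxT := heq T hTmem
    have hxc := heq c hcτ
    have hx₁T := heq₁ T hTmem
    have hx₁c := heq₁ c hcτ
    have hzT' : x T - x₁ T ≤ 0 := hzT
    show x c - x₁ c ≤ _
    linarith
  -- compare integrands a.e.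
  have hzcontC : ContinuousOn (fun s => C * z s) (Set.uIcc c T) := by
    rw [Set.uIcc_of_le hcT]
    exact continuousOn_const.mul (hzc.mono (fun s hs => hsubT ⟨hc0.trans hs.1, hs.2⟩))
  have hRint : IntervalIntegrable (fun s => |g₁ s| * (C * z s)) volume c T :=
    habs_ct.mul_continuousOn hzcontC
  have hLint : IntervalIntegrable (fun s => g₁ s / x₁ s ^ α - g s / x s ^ α) volume c T :=
    hIx₁.sub hIx
  have h0ae : ∀ᵐ s ∂(volume : Measure ℝ), s ≠ 0 := by
    have hset : {a : ℝ | ¬ a ≠ 0} = {0} := by ext a; simp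
    rw [MeasureTheory.ae_iff, hset]
    exact measure_singleton 0
  have key2 : (∫ s in c..T, (g₁ s / x₁ s ^ α - g s / x s ^ α))
      ≤ ∫ s in c..T, |g₁ s| * (C * z s) := by
    refine integral_mono_ae_restrict hcT hLint hRint ?_
    filter_upwards [ae_restrict_mem measurableSet_Icc, ae_restrict_of_ae hg,
      ae_restrict_of_ae h0ae] with s hs hgs hs0
    have hsI : s ∈ Set.Icc (0:ℝ) T := ⟨hc0.trans hs.1, hs.2⟩
    have hsιτ : s ∈ Set.Ioo (0:ℝ) τ :=
      ⟨lt_of_le_of_ne hsI.1 (Ne.symm hs0), lt_of_le_of_lt hsI.2 hTτ⟩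
    have hgs' := hgs hsιτ
    have hxm := hmx s hsI
    have hx₁m := hmx₁ s hsI
    have hxs : 0 < x s := hmpos.trans_le hxm
    have hx₁s : 0 < x₁ s := hmpos.trans_le hx₁m
    have hxα : 0 < x s ^ α := Real.rpow_pos_of_pos hxs α
    have step1 : g₁ s / x₁ s ^ α - g s / x s ^ α ≤ g₁ s / x₁ s ^ α - g₁ s / x s ^ α := by
      have : g₁ s / x s ^ α ≤ g s / x s ^ α := by gcongr
      linarith
    have step2 : g₁ s / x₁ s ^ α - g₁ s / x s ^ α
        = g₁ s * (x₁ s ^ (-α) - x s ^ (-α)) := by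
      rw [Real.rpow_neg hx₁s.le, Real.rpow_neg hxs.le]
      field_simp
    have step3 : g₁ s * (x₁ s ^ (-α) - x s ^ (-α))
        ≤ |g₁ s| * |x₁ s ^ (-α) - x s ^ (-α)| := by
      calc g₁ s * (x₁ s ^ (-α) - x s ^ (-α))
          ≤ |g₁ s * (x₁ s ^ (-α) - x s ^ (-α))| := le_abs_self _
        _ = |g₁ s| * |x₁ s ^ (-α) - x s ^ (-α)| := abs_mul _ _
    have step4 : |x₁ s ^ (-α) - x s ^ (-α)| ≤ C * |x₁ s - x s| :=
      aux_lip hα hmpos hx₁m hxm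
    have habs_z : |x₁ s - x s| = z s := by
      rw [abs_sub_comm]
      exact abs_of_nonneg (hz_nonneg s hsI)
    calc g₁ s / x₁ s ^ α - g s / x s ^ α
        ≤ g₁ s / x₁ s ^ α - g₁ s / x s ^ α := step1
      _ = g₁ s * (x₁ s ^ (-α) - x s ^ (-α)) := step2
      _ ≤ |g₁ s| * |x₁ s ^ (-α) - x s ^ (-α)| := step3
      _ ≤ |g₁ s| * (C * |x₁ s - x s|) :=
          mul_le_mul_of_nonneg_left step4 (abs_nonneg _)
      _ = |g₁ s| * (C * z s) := by rw [habs_z]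
  have key3 : (∫ s in c..T, |g₁ s| * (C * z s))
      ≤ ∫ s in c..T, |g₁ s| * (C * z c) := by
    refine integral_mono_on hcT hRint (habs_ct.mul_const _) ?_
    intro s hs
    have hsmem : s ∈ Set.Icc t₁ T := ⟨hcmem.1.trans hs.1, hs.2⟩
    exact mul_le_mul_of_nonneg_left
      (mul_le_mul_of_nonneg_left (hcmax hsmem) hC) (abs_nonneg _)
  have key4 : (∫ s in c..T, |g₁ s| * (C * z c))
      = (C * z c) * ∫ s in c..T, |g₁ s| := by
    rw [intervalIntegral.integral_mul_const]; ring
  have key5 : (∫ s in c..T, |g₁ s|) ≤ ∫ s in t₁..T, |g₁ s| := by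
    have hsum := integral_add_adjacent_intervals habs_tc habs_ct
    have h1 : 0 ≤ ∫ s in t₁..c, |g₁ s| :=
      integral_nonneg hcmem.1 (fun u _ => abs_nonneg _)
    linarith
  have hV0 : 0 ≤ ∫ s in c..T, |g₁ s| :=
    integral_nonneg hcT (fun u _ => abs_nonneg _)
  have hCε : C * ε ≤ 1 / 2 := by
    rw [hεdef, mul_one_div, div_le_div_iff₀ (by positivity) (by norm_num)]
    linarith
  have hCV : C * (∫ s in c..T, |g₁ s|) ≤ 1 / 2 :=
    le_trans (mul_le_mul_of_nonneg_left (key5.trans ht₁ε.le) hC) hCε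
  have hfin : z c ≤ (C * z c) * ∫ s in c..T, |g₁ s| := by
    calc z c ≤ (∫ s in c..T, g₁ s / x₁ s ^ α) - ∫ s in c..T, g s / x s ^ α := key1
      _ = ∫ s in c..T, (g₁ s / x₁ s ^ α - g s / x s ^ α) := (integral_sub hIx₁ hIx).symm
      _ ≤ ∫ s in c..T, |g₁ s| * (C * z s) := key2
      _ ≤ ∫ s in c..T, |g₁ s| * (C * z c) := key3
      _ = (C * z c) * ∫ s in c..T, |g₁ s| := key4
  have hlast : (C * z c) * (∫ s in c..T, |g₁ s|) ≤ z c * (1 / 2) := by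
    have : z c * (C * ∫ s in c..T, |g₁ s|) ≤ z c * (1 / 2) :=
      mul_le_mul_of_nonneg_left hCV hMpos.le
    linarith [this, mul_comm (C * z c) (∫ s in c..T, |g₁ s|)]
  have hhalf : z c ≤ z c * (1 / 2) := le_trans hfin hlast
  nlinarith [hMpos, hhalf]
end

section
/- Let α > 0, k > k₀ := (α+1)·α^(−α/(α+1)), and let z₁ be the smaller positive root of z^(α+1) − k·z^α + 1 = 0. Then γ := α(k − z₁)/z₁ − 1 > 0. -/
open Real Set

theorem stmt_15 (α k z₁ : ℝ) (hα : 0 < α)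
    (hk : (α + 1) * α ^ (-(α / (α + 1))) < k)
    (hz₁pos : 0 < z₁) (hz₁root : z₁ ^ (α + 1) - k * z₁ ^ α + 1 = 0)
    (hz₁min : ∀ z : ℝ, 0 < z → z ^ (α + 1) - k * z ^ α + 1 = 0 → z₁ ≤ z) :
    0 < α * (k - z₁) / z₁ - 1 := by
  have hα1 : (0:ℝ) < α + 1 := by linarith
  have hk0pos : 0 < (α + 1) * α ^ (-(α / (α + 1))) := by positivity
  have hkpos : 0 < k := hk0pos.trans hk
  set m : ℝ := α * k / (α + 1) with hm
  have hmpos : 0 < m := by positivity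
  have hApos : (0:ℝ) < α ^ α := Real.rpow_pos_of_pos hα α
  have hBpos : (0:ℝ) < (α + 1) ^ α := Real.rpow_pos_of_pos hα1 α
  -- k ^ (α+1) > (α+1)^(α+1) * α^(-α)
  have hK : (α + 1) ^ (α + 1) * α ^ (-α) < k ^ (α + 1) := by
    have h := Real.rpow_lt_rpow hk0pos.le hk hα1
    have hexp : -(α / (α + 1)) * (α + 1) = -α := by field_simp
    rwa [Real.mul_rpow hα1.le (by positivity), ← Real.rpow_mul hα.le, hexp] at h
  -- compute f m < 0
  have hfm : m ^ (α + 1) - k * m ^ α + 1 < 0 := by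
    have hma : m ^ (α + 1) = m ^ α * m := by
      rw [Real.rpow_add hmpos, Real.rpow_one]
    have hmα : m ^ α = α ^ α * k ^ α / (α + 1) ^ α := by
      rw [hm, Real.div_rpow (by positivity) hα1.le, Real.mul_rpow hα.le hkpos.le]
    have hk1 : k ^ (α + 1) = k ^ α * k := by
      rw [Real.rpow_add hkpos, Real.rpow_one]
    have hB1 : (α + 1) ^ (α + 1) = (α + 1) ^ α * (α + 1) := by
      rw [Real.rpow_add hα1, Real.rpow_one]
    have hAneg : α ^ (-α) = (α ^ α)⁻¹ := Real.rpow_neg hα.le α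
    rw [hma, hmα, hm]
    rw [hB1, hAneg, hk1] at hK
    have hKAB : (α + 1) ^ α * (α + 1) < α ^ α * (k ^ α * k) := by
      have h2 := mul_lt_mul_of_pos_right hK hApos
      have e1 : (α + 1) ^ α * (α + 1) * (α ^ α)⁻¹ * α ^ α = (α + 1) ^ α * (α + 1) := by
        field_simp
      have e2 : k ^ α * k * α ^ α = α ^ α * (k ^ α * k) := by ring
      rw [e1, e2] at h2; exact h2
    have h1 : α ^ α * k ^ α / (α + 1) ^ α * (α * k / (α + 1)) - k * (α ^ α * k ^ α / (α + 1) ^ α) + 1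
        = 1 - α ^ α * (k ^ α * k) / ((α + 1) ^ α * (α + 1)) := by
      field_simp
      ring
    rw [h1]
    have : 1 < α ^ α * (k ^ α * k) / ((α + 1) ^ α * (α + 1)) :=
      (one_lt_div (by positivity)).mpr hKAB
    linarith
  -- a small positive point where f > 0
  set t : ℝ := min (m / 2) ((2 * k)⁻¹ ^ α⁻¹) with ht
  have htpos : 0 < t := lt_min (by linarith) (Real.rpow_pos_of_pos (by positivity) _)
  have htα : t ^ α ≤ (2 * k)⁻¹ := by
    have := Real.rpow_le_rpow htpos.le (min_le_right (m / 2) ((2 * k)⁻¹ ^ α⁻¹)) hα.le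
    rwa [← Real.rpow_mul (by positivity), inv_mul_cancel₀ hα.ne', Real.rpow_one] at this
  have hft : 0 < t ^ (α + 1) - k * t ^ α + 1 := by
    have h1 : (0:ℝ) ≤ t ^ (α + 1) := Real.rpow_nonneg htpos.le _
    have h2 : k * t ^ α ≤ k * (2 * k)⁻¹ := by
      exact mul_le_mul_of_nonneg_left htα hkpos.le
    have h3 : k * (2 * k)⁻¹ = 1 / 2 := by field_simp
    linarith
  have htm : t ≤ m := le_trans (min_le_left _ _) (by linarith)
  -- continuity
  have hcont : ContinuousOn (fun z : ℝ => z ^ (α + 1) - k * z ^ α + 1) (Icc t m) := by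
    apply ContinuousOn.add _ continuousOn_const
    apply ContinuousOn.sub
    · exact continuousOn_id.rpow_const (fun x _ => Or.inr hα1.le)
    · exact continuousOn_const.mul (continuousOn_id.rpow_const (fun x _ => Or.inr hα.le))
  -- IVT
  have h0mem : (0:ℝ) ∈ Icc ((fun z : ℝ => z ^ (α + 1) - k * z ^ α + 1) m)
      ((fun z : ℝ => z ^ (α + 1) - k * z ^ α + 1) t) := ⟨hfm.le, hft.le⟩
  obtain ⟨c, hc, hgc⟩ := intermediate_value_Icc' htm hcont h0mem
  have hcpos : 0 < c := lt_of_lt_of_le htpos hc.1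
  have hz₁c : z₁ ≤ c := hz₁min c hcpos hgc
  have hz₁m : z₁ < m := by
    rcases lt_or_eq_of_le (le_trans hz₁c hc.2) with h | h
    · exact h
    · exfalso; rw [h] at hz₁root; linarith
  -- conclude
  rw [sub_pos, lt_div_iff₀ hz₁pos, one_mul]
  rw [hm, lt_div_iff₀ hα1] at hz₁m
  nlinarith
end

section
/- Let α > 0, σ > 0 and Λ₁ ≥ 0 with σ > k₀·Λ₁^(1/(α+1)) where k₀ = (α+1)·α^(−α/(α+1)). Let ν be the largest positive root of z^(α+1) − σ·z^α + Λ₁ = 0 (with ν = σ if Λ₁ = 0). Then α·Λ₁/ν^(α+1) < 1, i.e. α(σ − ν)/ν < 1. -/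
theorem stmt_16 (α σ Λ₁ ν : ℝ) (hα : 0 < α) (hσ : 0 < σ) (hΛ₁ : 0 ≤ Λ₁)
    (hσΛ : (α + 1) * α ^ (-(α / (α + 1))) * Λ₁ ^ (1 / (α + 1)) < σ)
    (hνpos : 0 < ν) (hνroot : ν ^ (α + 1) - σ * ν ^ α + Λ₁ = 0)
    (hνmax : ∀ z : ℝ, 0 < z → z ^ (α + 1) - σ * z ^ α + Λ₁ = 0 → z ≤ ν) :
    α * Λ₁ / ν ^ (α + 1) < 1 ∧ α * (σ - ν) / ν < 1 := by
  have hα1 : (0:ℝ) < α + 1 := by linarith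
  set s : ℝ := σ * α / (α + 1) with hs
  have hspos : 0 < s := by positivity
  have hsσ : s < σ := by
    rw [hs, div_lt_iff₀ hα1]; nlinarith
  -- key inequality from hσΛ
  have hkey : Λ₁ < σ ^ (α+1) * α ^ α / (α+1) ^ (α+1) := by
    have h0 : (0:ℝ) ≤ (α + 1) * α ^ (-(α / (α + 1))) * Λ₁ ^ (1 / (α + 1)) := by positivity
    have h1 := Real.rpow_lt_rpow h0 hσΛ hα1
    rw [Real.mul_rpow (by positivity) (by positivity),
        Real.mul_rpow (by positivity) (by positivity),
        ← Real.rpow_mul hα.le, ← Real.rpow_mul hΛ₁] at h1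
    have e1 : -(α / (α + 1)) * (α + 1) = -α := by field_simp
    have e2 : 1 / (α + 1) * (α + 1) = 1 := by field_simp
    rw [e1, e2, Real.rpow_one, Real.rpow_neg hα.le] at h1
    have hαα : (0:ℝ) < α ^ α := Real.rpow_pos_of_pos hα α
    have hαα1 : (0:ℝ) < (α+1) ^ (α+1) := Real.rpow_pos_of_pos hα1 (α+1)
    rw [lt_div_iff₀ hαα1]
    calc Λ₁ * (α+1)^(α+1) = ((α+1)^(α+1) * (α^α)⁻¹ * Λ₁) * α^α := by
          field_simp
      _ < σ^(α+1) * α^α := by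
          exact mul_lt_mul_of_pos_right h1 hαα
  -- value at s
  have hsα : s ^ α = σ ^ α * α ^ α / (α+1) ^ α := by
    rw [hs, Real.div_rpow (by positivity) hα1.le, Real.mul_rpow hσ.le hα.le]
  have hprod : s ^ α * (σ - s) = σ ^ (α+1) * α ^ α / (α+1) ^ (α+1) := by
    have h2 : σ - s = σ / (α+1) := by rw [hs]; field_simp; ring
    rw [hsα, h2, Real.rpow_add hσ, Real.rpow_add hα1, Real.rpow_one, Real.rpow_one]
    have hαα1 : ((α+1):ℝ) ^ α ≠ 0 := ne_of_gt (Real.rpow_pos_of_pos hα1 α)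
    field_simp
  have hfs : s ^ (α+1) - σ * s ^ α + Λ₁ < 0 := by
    have : s ^ (α+1) = s ^ α * s := by
      rw [Real.rpow_add hspos, Real.rpow_one]
    rw [this]
    have : s ^ α * s - σ * s ^ α + Λ₁ = -(s ^ α * (σ - s)) + Λ₁ := by ring
    rw [this, hprod]
    linarith
  -- IVT to find a root c in (s, σ]
  set f : ℝ → ℝ := fun z => z ^ (α+1) - σ * z ^ α + Λ₁ with hf
  have hcont : ContinuousOn f (Set.Icc s σ) := by
    have hne : ∀ x ∈ Set.Icc s σ, x ≠ 0 ∨ 0 ≤ α + 1 := fun x hx => Or.inl (ne_of_gt (lt_of_lt_of_le hspos hx.1))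
    have hne2 : ∀ x ∈ Set.Icc s σ, x ≠ 0 ∨ 0 ≤ α := fun x hx => Or.inl (ne_of_gt (lt_of_lt_of_le hspos hx.1))
    exact ((continuousOn_id.rpow_const hne).sub
      (continuousOn_const.mul (continuousOn_id.rpow_const hne2))).add continuousOn_const
  have hfσ : f σ = Λ₁ := by
    simp only [hf]
    rw [Real.rpow_add hσ, Real.rpow_one]
    ring
  have hmem : (0:ℝ) ∈ Set.Icc (f s) (f σ) := by
    constructor
    · exact le_of_lt hfs
    · rw [hfσ]; exact hΛ₁
  obtain ⟨c, hc, hfc⟩ := intermediate_value_Icc hsσ.le hcont hmem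
  have hcpos : 0 < c := lt_of_lt_of_le hspos hc.1
  have hcs : s < c := by
    rcases lt_or_eq_of_le hc.1 with h | h
    · exact h
    · exfalso; rw [← h] at hfc; exact absurd hfc (ne_of_lt hfs)
  have hcν : c ≤ ν := hνmax c hcpos hfc
  have hsν : s < ν := lt_of_lt_of_le hcs hcν
  -- so (α+1)ν > σα
  have hmain : α * (σ - ν) < ν := by
    have : σ * α < ν * (α + 1) := by
      rw [hs, div_lt_iff₀ hα1] at hsν; linarith
    nlinarith
  have hνα : (0:ℝ) < ν ^ α := Real.rpow_pos_of_pos hνpos α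
  have hνα1 : ν ^ (α+1) = ν ^ α * ν := by
    rw [Real.rpow_add hνpos, Real.rpow_one]
  have hΛeq : Λ₁ = ν ^ α * (σ - ν) := by
    rw [hνα1] at hνroot; nlinarith
  constructor
  · rw [hνα1, hΛeq, div_lt_one (by positivity)]
    nlinarith
  · rw [div_lt_one hνpos]
    exact hmain
end

section
/- Let α > 0, μ > 0. Suppose g ∈ L¹_loc((0,τ)) is nonnegative, G(t) = ((α+1)∫₀ᵗ g)^(1/(α+1)), β ∈ ℝ, f continuous with f ≤ β·G on [0,τ), and x : [0,τ') → (0,∞) is a continuous solution of x(t) = μ + f(t) + ∫₀ᵗ g(s)/x(s)^α ds on [0, τ') with τ' ≤ τ. Then x(t) > f(t) + β₀^(−α)·G(t) for all t ∈ [0,τ'), where β₀ is the unique positive root of z^(α+1) − β·z^α − 1 = 0. -/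
open MeasureTheory intervalIntegral Set Topology Filter

private lemma lem_mvt {p a b : ℝ} (ha : 0 < a) (hab : a < b) :
    ∃ ξ, a < ξ ∧ ξ < b ∧ b ^ p - a ^ p = p * ξ ^ (p - 1) * (b - a) := by
  have hcont : ContinuousOn (fun y : ℝ => y ^ p) (Icc a b) := by
    apply ContinuousOn.rpow_const continuousOn_id
    intro y hy
    exact Or.inl (ne_of_gt (lt_of_lt_of_le ha hy.1))
  have hderiv : ∀ y ∈ Ioo a b, HasDerivAt (fun y : ℝ => y ^ p) (p * y ^ (p - 1)) y := by
    intro y hy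
    exact Real.hasDerivAt_rpow_const (Or.inl (ne_of_gt (lt_trans ha hy.1)))
  obtain ⟨ξ, hξ, hslope⟩ := exists_hasDerivAt_eq_slope (fun y : ℝ => y ^ p)
    (fun y => p * y ^ (p - 1)) hab hcont hderiv
  refine ⟨ξ, hξ.1, hξ.2, ?_⟩
  have hba : b - a ≠ 0 := sub_ne_zero.mpr (ne_of_gt hab)
  field_simp at hslope
  linarith [hslope]

private lemma lem_concave {p a b : ℝ} (hp0 : 0 < p) (hp1 : p ≤ 1) (ha : 0 < a) (hab : a ≤ b) :
    b ^ p - a ^ p ≤ p * a ^ (p - 1) * (b - a) := by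
  rcases eq_or_lt_of_le hab with rfl | h
  · simp
  obtain ⟨ξ, hξ1, hξ2, heq⟩ := lem_mvt (p := p) ha h
  rw [heq]
  have hle : ξ ^ (p - 1) ≤ a ^ (p - 1) :=
    Real.rpow_le_rpow_of_nonpos ha (le_of_lt hξ1) (by linarith)
  have hba : (0:ℝ) ≤ b - a := by linarith
  exact mul_le_mul_of_nonneg_right (mul_le_mul_of_nonneg_left hle hp0.le) hba

private lemma lem_convex {α c a b : ℝ} (hα : 0 < α) (hc : 0 < c) (hca : c ≤ a) (hab : a ≤ b) :
    a ^ (-α) - b ^ (-α) ≤ α * c ^ (-α - 1) * (b - a) := by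
  have ha : 0 < a := lt_of_lt_of_le hc hca
  rcases eq_or_lt_of_le hab with rfl | h
  · simp
  obtain ⟨ξ, hξ1, hξ2, heq⟩ := lem_mvt (p := -α) ha h
  have h1 : a ^ (-α) - b ^ (-α) = α * ξ ^ (-α - 1) * (b - a) := by
    linear_combination -heq
  rw [h1]
  have hle : ξ ^ (-α - 1) ≤ c ^ (-α - 1) :=
    Real.rpow_le_rpow_of_nonpos hc (le_trans hca (le_of_lt hξ1)) (by linarith)
  have hba : (0:ℝ) ≤ b - a := by linarith
  exact mul_le_mul_of_nonneg_right (mul_le_mul_of_nonneg_left hle hα.le) hba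

private lemma lem_crossing {w : ℝ → ℝ} {c d : ℝ} (hcd : c ≤ d)
    (hw : ContinuousOn w (Icc c d)) (hc : 0 < w c) (hd : w d ≤ 0) :
    ∃ e, c < e ∧ e ≤ d ∧ w e = 0 ∧ ∀ r, c ≤ r → r < e → 0 < w r := by
  set S : Set ℝ := Icc c d ∩ w ⁻¹' Iic 0 with hS
  have hSne : S.Nonempty := ⟨d, ⟨⟨hcd, le_refl d⟩, hd⟩⟩
  have hSbdd : BddBelow S := ⟨c, fun r hr => hr.1.1⟩
  have hSclosed : IsClosed S := hw.preimage_isClosed_of_isClosed isClosed_Icc isClosed_Iic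
  set e := sInf S with he
  have heS : e ∈ S := hSclosed.csInf_mem hSne hSbdd
  have hec : c ≤ e := heS.1.1
  have hed : e ≤ d := heS.1.2
  have hpos : ∀ r, c ≤ r → r < e → 0 < w r := by
    intro r hcr hre
    by_contra hcon
    push_neg at hcon
    have : r ∈ S := ⟨⟨hcr, le_trans (le_of_lt hre) hed⟩, hcon⟩
    exact absurd (csInf_le hSbdd this) (not_le.mpr hre)
  have hce : c < e := by
    rcases eq_or_lt_of_le hec with heq | h
    · exact absurd heS.2 (by rw [← heq]; exact not_le.mpr hc)
    · exact h
  refine ⟨e, hce, hed, ?_, hpos⟩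
  have hle : w e ≤ 0 := heS.2
  have hge : 0 ≤ w e := by
    have hnb : (𝓝[Ico c e] e).NeBot := by
      refine mem_closure_iff_nhdsWithin_neBot.mp ?_
      rw [closure_Ico (ne_of_lt hce)]
      exact ⟨hec, le_refl e⟩
    have htend : Filter.Tendsto w (𝓝[Ico c e] e) (𝓝 (w e)) :=
      (hw e ⟨hec, hed⟩).mono (fun r hr => ⟨hr.1, le_trans hr.2.le hed⟩)
    refine ge_of_tendsto htend ?_
    filter_upwards [self_mem_nhdsWithin] with r hr
    exact le_of_lt (hpos r hr.1 hr.2)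
  linarith

set_option maxHeartbeats 1000000 in
theorem stmt_18 (α μ τ τ' β β₀ : ℝ) (hα : 0 < α) (hμ : 0 < μ) (hτ : 0 < τ)
    (hτ' : 0 < τ') (hττ' : τ' ≤ τ)
    (g f x G : ℝ → ℝ)
    (hgnn : ∀ᵐ s ∂(volume : Measure ℝ), s ∈ Set.Ioo 0 τ → 0 ≤ g s)
    (hgint : ∀ t ∈ Set.Ico (0:ℝ) τ, IntervalIntegrable g volume 0 t)
    (hG : ∀ t ∈ Set.Ico (0:ℝ) τ,
      G t = ((α + 1) * ∫ s in (0:ℝ)..t, g s) ^ (1 / (α + 1)))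
    (hf : ContinuousOn f (Set.Ico 0 τ))
    (hfb : ∀ t ∈ Set.Ico (0:ℝ) τ, f t ≤ β * G t)
    (hx : ContinuousOn x (Set.Ico 0 τ'))
    (hxpos : ∀ t ∈ Set.Ico (0:ℝ) τ', 0 < x t)
    (hint : ∀ t ∈ Set.Ico (0:ℝ) τ',
      IntervalIntegrable (fun s => g s / x s ^ α) volume 0 t)
    (heq : ∀ t ∈ Set.Ico (0:ℝ) τ',
      x t = μ + f t + ∫ s in (0:ℝ)..t, g s / x s ^ α)
    (hβ₀ : 0 < β₀ ∧ β₀ ^ (α + 1) - β * β₀ ^ α - 1 = 0) :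
    ∀ t ∈ Set.Ico (0:ℝ) τ', f t + β₀ ^ (-α) * G t < x t := by
  obtain ⟨hβ₀p, hβ₀r⟩ := hβ₀
  have hα1 : (0:ℝ) < α + 1 := by linarith
  have hβ₀α : (0:ℝ) < β₀ ^ α := Real.rpow_pos_of_pos hβ₀p α
  have hroot : β₀ - β = β₀ ^ (-α) := by
    have h1 : β₀ ^ (α+1) = β₀ ^ α * β₀ := Real.rpow_add_one (ne_of_gt hβ₀p) α
    have h2 : (β₀ - β) * β₀ ^ α = 1 := by linear_combination hβ₀r - h1
    rw [Real.rpow_neg hβ₀p.le]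
    field_simp
    linarith [h2]
  have hββ₀ : 0 < β₀ - β := by
    rw [hroot]; exact Real.rpow_pos_of_pos hβ₀p _
  intro t ht
  by_contra hcon
  push_neg at hcon
  obtain ⟨ht0, htτ'⟩ := ht
  have htτ : t < τ := lt_of_lt_of_le htτ' hττ'
  obtain ⟨I, hIdef⟩ : ∃ I : ℝ → ℝ, I = fun r => ∫ s in (0:ℝ)..r, g s := ⟨_, rfl⟩
  obtain ⟨q, hqdef⟩ : ∃ q : ℝ → ℝ, q = fun s => g s / x s ^ α := ⟨_, rfl⟩
  obtain ⟨h, hhdef⟩ : ∃ h : ℝ → ℝ, h = fun r => ∫ s in (0:ℝ)..r, q s := ⟨_, rfl⟩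
  obtain ⟨Gf, hGfdef⟩ : ∃ Gf : ℝ → ℝ, Gf = fun r => ((α+1) * I r) ^ (1/(α+1)) := ⟨_, rfl⟩
  obtain ⟨u, hudef⟩ : ∃ u : ℝ → ℝ, u = fun r => μ + h r - (β₀ - β) * Gf r := ⟨_, rfl⟩
  have hIr : ∀ r, I r = ∫ s in (0:ℝ)..r, g s := by intro r; rw [hIdef]
  have hhr : ∀ r, h r = ∫ s in (0:ℝ)..r, q s := by intro r; rw [hhdef]
  have hGfr : ∀ r, Gf r = ((α+1) * I r) ^ (1/(α+1)) := by intro r; rw [hGfdef]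
  have hur : ∀ r, u r = μ + h r - (β₀ - β) * Gf r := by intro r; rw [hudef]
  have hqint : ∀ r ∈ Set.Ico (0:ℝ) τ', IntervalIntegrable q volume 0 r := by
    intro r hr; rw [hqdef]; exact hint r hr
  have heq' : ∀ r ∈ Set.Ico (0:ℝ) τ', x r = μ + f r + h r := by
    intro r hr; rw [hhr, hqdef]; exact heq r hr
  -- integrability on subintervals
  have hIsub : ∀ s₁ s₂ : ℝ, 0 ≤ s₁ → s₁ ≤ s₂ → s₂ ≤ t → IntervalIntegrable g volume s₁ s₂ := by
    intro s₁ s₂ h1 h12 h2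
    refine (hgint t ⟨ht0, htτ⟩).mono_set ?_
    rw [uIcc_of_le ht0, uIcc_of_le h12]
    exact Icc_subset_Icc h1 h2
  have hqsub : ∀ s₁ s₂ : ℝ, 0 ≤ s₁ → s₁ ≤ s₂ → s₂ ≤ t → IntervalIntegrable q volume s₁ s₂ := by
    intro s₁ s₂ h1 h12 h2
    refine (hqint t ⟨ht0, htτ'⟩).mono_set ?_
    rw [uIcc_of_le ht0, uIcc_of_le h12]
    exact Icc_subset_Icc h1 h2
  -- a.e. nonnegativity
  have h0ne : ∀ᵐ (r : ℝ) ∂(volume : Measure ℝ), r ≠ 0 := by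
    rw [ae_iff]
    have he : {a : ℝ | ¬a ≠ 0} = {0} := by ext r; simp
    rw [he]
    exact measure_singleton 0
  have hgnn' : ∀ s₁ s₂ : ℝ, 0 ≤ s₁ → s₂ ≤ t →
      (∀ᵐ r ∂(volume : Measure ℝ).restrict (Icc s₁ s₂), 0 ≤ g r) := by
    intro s₁ s₂ h1 h2
    filter_upwards [ae_restrict_mem measurableSet_Icc, ae_restrict_of_ae hgnn,
      ae_restrict_of_ae h0ne] with r hr hgr hr0
    exact hgr ⟨lt_of_le_of_ne (le_trans h1 hr.1) (Ne.symm hr0),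
      lt_of_le_of_lt (le_trans hr.2 h2) htτ⟩
  have hqnn' : ∀ s₁ s₂ : ℝ, 0 ≤ s₁ → s₂ ≤ t →
      (∀ᵐ r ∂(volume : Measure ℝ).restrict (Icc s₁ s₂), 0 ≤ q r) := by
    intro s₁ s₂ h1 h2
    filter_upwards [ae_restrict_mem measurableSet_Icc, hgnn' s₁ s₂ h1 h2] with r hr hgr
    have hxr : 0 < x r := hxpos r ⟨le_trans h1 hr.1, lt_of_le_of_lt (le_trans hr.2 h2) htτ'⟩
    rw [hqdef]
    exact div_nonneg hgr (Real.rpow_nonneg hxr.le α)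
  -- differences as integrals, monotonicity
  have hIdiff : ∀ s₁ s₂ : ℝ, 0 ≤ s₁ → s₁ ≤ s₂ → s₂ ≤ t →
      I s₂ - I s₁ = ∫ r in s₁..s₂, g r := by
    intro s₁ s₂ h1 h12 h2
    have h3 := integral_add_adjacent_intervals (μ := volume) (f := g)
      (hIsub 0 s₁ le_rfl h1 (le_trans h12 h2)) (hIsub s₁ s₂ h1 h12 h2)
    rw [hIr, hIr]
    linarith [h3]
  have hhdiff : ∀ s₁ s₂ : ℝ, 0 ≤ s₁ → s₁ ≤ s₂ → s₂ ≤ t →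
      h s₂ - h s₁ = ∫ r in s₁..s₂, q r := by
    intro s₁ s₂ h1 h12 h2
    have h3 := integral_add_adjacent_intervals (μ := volume) (f := q)
      (hqsub 0 s₁ le_rfl h1 (le_trans h12 h2)) (hqsub s₁ s₂ h1 h12 h2)
    rw [hhr, hhr]
    linarith [h3]
  have hImono : ∀ s₁ s₂ : ℝ, 0 ≤ s₁ → s₁ ≤ s₂ → s₂ ≤ t → I s₁ ≤ I s₂ := by
    intro s₁ s₂ h1 h12 h2
    have hnn : 0 ≤ ∫ r in s₁..s₂, g r :=
      integral_nonneg_of_ae_restrict h12 (hgnn' s₁ s₂ h1 h2)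
    have h3 := hIdiff s₁ s₂ h1 h12 h2
    linarith
  have hhmono : ∀ s₁ s₂ : ℝ, 0 ≤ s₁ → s₁ ≤ s₂ → s₂ ≤ t → h s₁ ≤ h s₂ := by
    intro s₁ s₂ h1 h12 h2
    have hnn : 0 ≤ ∫ r in s₁..s₂, q r :=
      integral_nonneg_of_ae_restrict h12 (hqnn' s₁ s₂ h1 h2)
    have h3 := hhdiff s₁ s₂ h1 h12 h2
    linarith
  have hI0 : I 0 = 0 := by rw [hIr]; exact integral_same
  have hh0 : h 0 = 0 := by rw [hhr]; exact integral_same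
  have hInn : ∀ r : ℝ, 0 ≤ r → r ≤ t → 0 ≤ I r := by
    intro r h1 h2
    have h3 := hImono 0 r le_rfl h1 h2
    linarith
  have hhnn : ∀ r : ℝ, 0 ≤ r → r ≤ t → 0 ≤ h r := by
    intro r h1 h2
    have h3 := hhmono 0 r le_rfl h1 h2
    linarith
  have hGfnn : ∀ r : ℝ, 0 ≤ r → r ≤ t → 0 ≤ Gf r := by
    intro r h1 h2
    rw [hGfr]
    exact Real.rpow_nonneg (mul_nonneg hα1.le (hInn r h1 h2)) _
  have hGfmono : ∀ s₁ s₂ : ℝ, 0 ≤ s₁ → s₁ ≤ s₂ → s₂ ≤ t → Gf s₁ ≤ Gf s₂ := by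
    intro s₁ s₂ h1 h12 h2
    rw [hGfr, hGfr]
    exact Real.rpow_le_rpow (mul_nonneg hα1.le (hInn s₁ h1 (le_trans h12 h2)))
      (mul_le_mul_of_nonneg_left (hImono s₁ s₂ h1 h12 h2) hα1.le)
      (le_of_lt (div_pos one_pos hα1))
  have hGfI0 : ∀ r : ℝ, I r = 0 → Gf r = 0 := by
    intro r hr
    rw [hGfr, hr, mul_zero]
    exact Real.zero_rpow (ne_of_gt (div_pos one_pos hα1))
  have hGeq : ∀ r : ℝ, 0 ≤ r → r < τ → G r = Gf r := by
    intro r h1 h2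
    rw [hG r ⟨h1, h2⟩, hGfr, hIr]
  -- x r ≤ β₀ * Gf r + u r
  have hxle : ∀ r : ℝ, 0 ≤ r → r ≤ t → x r ≤ β₀ * Gf r + u r := by
    intro r h1 h2
    have hxr := heq' r ⟨h1, lt_of_le_of_lt h2 htτ'⟩
    have hfr := hfb r ⟨h1, lt_of_le_of_lt h2 (lt_of_lt_of_le htτ' hττ')⟩
    rw [hGeq r h1 (lt_of_le_of_lt h2 (lt_of_lt_of_le htτ' hττ'))] at hfr
    rw [hur]
    linarith [hxr, hfr]
  -- continuity
  have hIcont : ContinuousOn I (Icc 0 t) := by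
    have h3 := intervalIntegral.continuousOn_primitive_interval'
      (hgint t ⟨ht0, htτ⟩) left_mem_uIcc
    rw [uIcc_of_le ht0] at h3
    rw [hIdef]
    exact h3
  have hhcont : ContinuousOn h (Icc 0 t) := by
    have h3 := intervalIntegral.continuousOn_primitive_interval'
      (hqint t ⟨ht0, htτ'⟩) left_mem_uIcc
    rw [uIcc_of_le ht0] at h3
    rw [hhdef]
    exact h3
  have hGfcont : ContinuousOn Gf (Icc 0 t) := by
    rw [hGfdef]
    exact (continuousOn_const.mul hIcont).rpow_const
      (fun r _ => Or.inr (le_of_lt (div_pos one_pos hα1)))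
  have hucont : ContinuousOn u (Icc 0 t) := by
    rw [hudef]
    exact (continuousOn_const.add hhcont).sub (continuousOn_const.mul hGfcont)
  -- u t ≤ 0 < u 0
  have hut : u t ≤ 0 := by
    have hxt := heq' t ⟨ht0, htτ'⟩
    rw [hGeq t ht0 htτ, ← hroot] at hcon
    rw [hur]
    linarith [hcon, hxt]
  have hu0 : 0 < u 0 := by
    rw [hur, hh0, hGfI0 0 hI0, mul_zero]
    linarith
  -- first crossing
  obtain ⟨t₀, ht₀pos, ht₀t, hut₀, hupos⟩ := lem_crossing ht0 hucont hu0 hut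
  have hIt₀ : 0 < I t₀ := by
    rcases lt_or_eq_of_le (hInn t₀ ht₀pos.le ht₀t) with h' | h'
    · exact h'
    · exfalso
      have h4 := hGfI0 t₀ h'.symm
      have hht₀ := hhnn t₀ ht₀pos.le ht₀t
      rw [hur, h4, mul_zero] at hut₀
      linarith
  -- find t₁ < t₀ with I t₁ > 0
  obtain ⟨t₁, hIt₁, ht₁mem⟩ : ∃ t₁, I t₀ / 2 < I t₁ ∧ t₁ ∈ Ioo 0 t₀ := by
    have hnb : (𝓝[Ioo 0 t₀] t₀).NeBot := by
      refine mem_closure_iff_nhdsWithin_neBot.mp ?_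
      rw [closure_Ioo (ne_of_lt ht₀pos)]
      exact ⟨ht₀pos.le, le_refl _⟩
    have htend : Filter.Tendsto I (𝓝[Ioo 0 t₀] t₀) (𝓝 (I t₀)) :=
      (hIcont t₀ ⟨ht₀pos.le, ht₀t⟩).mono (fun r hr => ⟨hr.1.le, le_trans hr.2.le ht₀t⟩)
    exact ((htend.eventually_const_lt (by linarith)).and eventually_mem_nhdsWithin).exists
  have ht₁pos : 0 < t₁ := ht₁mem.1
  have ht₁t₀ : t₁ < t₀ := ht₁mem.2
  have ht₁t : t₁ ≤ t := le_trans ht₁t₀.le ht₀t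
  have hIt₁pos : 0 < I t₁ := by linarith
  have hut₁ : 0 < u t₁ := hupos t₁ ht₁pos.le ht₁t₀
  have hGft₁ : 0 < Gf t₁ := by
    rw [hGfr]
    exact Real.rpow_pos_of_pos (mul_pos hα1 hIt₁pos) _
  obtain ⟨K, hKdef⟩ : ∃ K : ℝ, K = α * (β₀ * Gf t₁) ^ (-α - 1) := ⟨_, rfl⟩
  have hK : 0 < K := by
    rw [hKdef]
    exact mul_pos hα (Real.rpow_pos_of_pos (mul_pos hβ₀p hGft₁) _)
  obtain ⟨D, hDdef⟩ : ∃ D : ℝ → ℝ,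
      D = fun r => (u t₁ / 2) * Real.exp (-(2*K*(I r - I t₁))) := ⟨_, rfl⟩
  have hDr : ∀ r, D r = (u t₁ / 2) * Real.exp (-(2*K*(I r - I t₁))) := by
    intro r; rw [hDdef]
  have hDpos : ∀ r, 0 < D r := by
    intro r
    rw [hDr]
    exact mul_pos (by linarith) (Real.exp_pos _)
  obtain ⟨w, hwdef⟩ : ∃ w : ℝ → ℝ, w = fun r => u r - D r := ⟨_, rfl⟩
  have hwr : ∀ r, w r = u r - D r := by intro r; rw [hwdef]
  have hwt₁ : 0 < w t₁ := by
    rw [hwr, hDr, sub_self, mul_zero, neg_zero, Real.exp_zero, mul_one]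
    linarith
  have hwt₀ : w t₀ ≤ 0 := by
    rw [hwr, hut₀]
    linarith [hDpos t₀]
  have hsub10 : Icc t₁ t₀ ⊆ Icc 0 t := Icc_subset_Icc ht₁pos.le ht₀t
  have hDcont : ContinuousOn D (Icc t₁ t₀) := by
    rw [hDdef]
    exact continuousOn_const.mul (Real.continuous_exp.comp_continuousOn
      ((continuousOn_const.mul ((hIcont.mono hsub10).sub continuousOn_const)).neg))
  have hwcont : ContinuousOn w (Icc t₁ t₀) := by
    rw [hwdef]
    exact (hucont.mono hsub10).sub hDcont
  obtain ⟨t₂, ht₁₂, ht₂₀, hwt₂, hwpos⟩ := lem_crossing ht₁t₀.le hwcont hwt₁ hwt₀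
  have ht₂t : t₂ ≤ t := le_trans ht₂₀ ht₀t
  have ht₂0 : 0 ≤ t₂ := le_trans ht₁pos.le ht₁₂.le
  have hut₂ : u t₂ = D t₂ := by
    rw [hwr] at hwt₂; linarith
  have hDt₂ : 0 < D t₂ := hDpos t₂
  obtain ⟨ε, hεdef⟩ : ∃ ε : ℝ, ε = D t₂ / (2*(β₀+1)) := ⟨_, rfl⟩
  have hε : 0 < ε := by
    rw [hεdef]
    exact div_pos hDt₂ (by linarith)
  -- choose s near t₂
  have hGftend : Filter.Tendsto Gf (𝓝[Icc t₁ t₂] t₂) (𝓝 (Gf t₂)) :=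
    (hGfcont t₂ ⟨ht₂0, ht₂t⟩).mono (Icc_subset_Icc ht₁pos.le ht₂t)
  have hutend : Filter.Tendsto u (𝓝[Icc t₁ t₂] t₂) (𝓝 (u t₂)) :=
    (hucont t₂ ⟨ht₂0, ht₂t⟩).mono (Icc_subset_Icc ht₁pos.le ht₂t)
  have hev : ∀ᶠ r in 𝓝[Icc t₁ t₂] t₂, Gf t₂ - ε < Gf r ∧ u r < u t₂ + ε :=
    (hGftend.eventually_const_lt (by linarith)).and
      (hutend.eventually_lt_const (by linarith))
  obtain ⟨η, hη, hball⟩ := Metric.mem_nhdsWithin_iff.mp (Filter.eventually_iff.mp hev)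
  obtain ⟨s, hsdef⟩ : ∃ s : ℝ, s = max t₁ (t₂ - η/2) := ⟨_, rfl⟩
  have hst₁ : t₁ ≤ s := by rw [hsdef]; exact le_max_left _ _
  have hst₂ : s < t₂ := by rw [hsdef]; exact max_lt ht₁₂ (by linarith)
  have hs0 : 0 ≤ s := le_trans ht₁pos.le hst₁
  have hst : s ≤ t := le_trans hst₂.le ht₂t
  have hsP : ∀ r, s ≤ r → r ≤ t₂ → Gf t₂ - Gf r ≤ ε ∧ u r ≤ u t₂ + ε := by
    intro r h1 h2
    have h3 : t₂ - η/2 ≤ s := by rw [hsdef]; exact le_max_right _ _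
    have hrb : r ∈ Metric.ball t₂ η ∩ Icc t₁ t₂ := by
      refine ⟨?_, ⟨le_trans hst₁ h1, h2⟩⟩
      rw [Metric.mem_ball, Real.dist_eq, abs_lt]
      exact ⟨by linarith, by linarith⟩
    have h4 := hball hrb
    exact ⟨by linarith [h4.1], (h4.2).le⟩
  have hws : 0 < w s := hwpos s hst₁ hst₂
  -- main estimates
  obtain ⟨B, hBdef⟩ : ∃ B : ℝ, B = β₀ * Gf t₂ + (u t₂ + ε) := ⟨_, rfl⟩
  have hut₂pos : 0 < u t₂ := by rw [hut₂]; exact hDt₂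
  have hBpos : 0 < B := by
    have h1 : 0 ≤ β₀ * Gf t₂ := mul_nonneg hβ₀p.le (hGfnn t₂ ht₂0 ht₂t)
    rw [hBdef]
    linarith
  have hΔI : 0 ≤ I t₂ - I s := by
    have h3 := hImono s t₂ hs0 hst₂.le ht₂t
    linarith
  -- E1 : lower bound on h-increment
  have hE1 : (I t₂ - I s) * B ^ (-α) ≤ h t₂ - h s := by
    have hcomp : ∀ᵐ r ∂(volume : Measure ℝ).restrict (Icc s t₂),
        g r * B ^ (-α) ≤ q r := by
      filter_upwards [ae_restrict_mem measurableSet_Icc, hgnn' s t₂ hs0 ht₂t] with r hr hgr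
      have hr0 : 0 ≤ r := le_trans hs0 hr.1
      have hrt : r ≤ t := le_trans hr.2 ht₂t
      have hxr : 0 < x r := hxpos r ⟨hr0, lt_of_le_of_lt hrt htτ'⟩
      have hxB : x r ≤ B := by
        have h1 := hxle r hr0 hrt
        have h2 : Gf r ≤ Gf t₂ := hGfmono r t₂ hr0 hr.2 ht₂t
        have h3 : u r ≤ u t₂ + ε := (hsP r hr.1 hr.2).2
        have h4 : β₀ * Gf r ≤ β₀ * Gf t₂ := mul_le_mul_of_nonneg_left h2 hβ₀p.le
        rw [hBdef]
        linarith
      have hpow : x r ^ α ≤ B ^ α := Real.rpow_le_rpow hxr.le hxB hα.le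
      have hxpow : 0 < x r ^ α := Real.rpow_pos_of_pos hxr α
      have hinv : (B ^ α)⁻¹ ≤ (x r ^ α)⁻¹ := inv_anti₀ hxpow hpow
      calc g r * B ^ (-α) = g r * (B ^ α)⁻¹ := by rw [Real.rpow_neg hBpos.le]
        _ ≤ g r * (x r ^ α)⁻¹ := mul_le_mul_of_nonneg_left hinv hgr
        _ = q r := by rw [hqdef]; simp [div_eq_mul_inv]
    have hmono := integral_mono_ae_restrict hst₂.le
      ((hIsub s t₂ hs0 hst₂.le ht₂t).mul_const _) (hqsub s t₂ hs0 hst₂.le ht₂t) hcomp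
    rw [intervalIntegral.integral_mul_const] at hmono
    rw [← hhdiff s t₂ hs0 hst₂.le ht₂t, ← hIdiff s t₂ hs0 hst₂.le ht₂t] at hmono
    exact hmono
  -- E2 : upper bound on Gf-increment
  have hIs : 0 < I s := lt_of_lt_of_le hIt₁pos (hImono t₁ s ht₁pos.le hst₁ hst)
  have hE2 : Gf t₂ - Gf s ≤ (I t₂ - I s) * Gf s ^ (-α) := by
    have ha2 : (0:ℝ) < (α+1) * I s := mul_pos hα1 hIs
    have hab2 : (α+1) * I s ≤ (α+1) * I t₂ :=
      mul_le_mul_of_nonneg_left (by linarith) hα1.le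
    have hkey := lem_concave (div_pos one_pos hα1)
      (by rw [div_le_one hα1]; linarith) ha2 hab2
    have hpowid : Gf s ^ (-α) = ((α+1) * I s) ^ (1/(α+1) - 1) := by
      rw [hGfr, ← Real.rpow_mul ha2.le]
      congr 1
      field_simp
      ring
    rw [hpowid, hGfr t₂, hGfr s]
    have heq2 : 1/(α+1) * ((α+1) * I s) ^ (1/(α+1) - 1) * ((α+1) * I t₂ - (α+1) * I s)
        = (I t₂ - I s) * ((α+1) * I s) ^ (1/(α+1) - 1) := by
      field_simp
    linarith [hkey, heq2]
  -- E3 : convexity bound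
  have hGfs_lb : β₀ * Gf t₁ ≤ β₀ * Gf s :=
    mul_le_mul_of_nonneg_left (hGfmono t₁ s ht₁pos.le hst₁ hst) hβ₀p.le
  have hAB : β₀ * Gf s ≤ B := by
    have h1 : β₀ * Gf s ≤ β₀ * Gf t₂ :=
      mul_le_mul_of_nonneg_left (hGfmono s t₂ hs0 hst₂.le ht₂t) hβ₀p.le
    rw [hBdef]
    linarith
  have hE3 : (β₀ * Gf s) ^ (-α) - B ^ (-α) ≤ K * (B - β₀ * Gf s) := by
    have h1 := lem_convex hα (mul_pos hβ₀p hGft₁) hGfs_lb hAB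
    rw [hKdef]
    linarith [h1]
  have hBA : B - β₀ * Gf s ≤ 2 * D t₂ := by
    have h1 : Gf t₂ - Gf s ≤ ε := (hsP s le_rfl hst₂.le).1
    have h2 : β₀ * (Gf t₂ - Gf s) ≤ β₀ * ε := mul_le_mul_of_nonneg_left h1 hβ₀p.le
    have hb1 : β₀ + 1 ≠ 0 := ne_of_gt (by linarith)
    have h3 : (β₀+1) * ε = D t₂ / 2 := by
      rw [hεdef]
      field_simp
    have h4 : B - β₀ * Gf s = β₀ * (Gf t₂ - Gf s) + (u t₂ + ε) := by
      rw [hBdef]; ring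
    rw [hut₂] at h4
    linarith [hDt₂, h1, h2, h3, h4]
  -- E4 : lower bound on u-increment
  have hGfsnn : (0:ℝ) ≤ Gf s := hGfnn s hs0 hst
  have hmulrpow : (β₀ * Gf s) ^ (-α) = (β₀ - β) * Gf s ^ (-α) := by
    rw [Real.mul_rpow hβ₀p.le hGfsnn, ← hroot]
  have hE4 : u t₂ - u s ≥ -((I t₂ - I s) * (K * (2 * D t₂))) := by
    have hu2s : u t₂ - u s = (h t₂ - h s) - (β₀ - β) * (Gf t₂ - Gf s) := by
      rw [hur, hur]; ring
    have hmul : (β₀ - β) * (Gf t₂ - Gf s) ≤ (I t₂ - I s) * ((β₀ * Gf s) ^ (-α)) := by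
      have h1 : (β₀-β) * (Gf t₂ - Gf s) ≤ (β₀-β) * ((I t₂ - I s) * Gf s ^ (-α)) :=
        mul_le_mul_of_nonneg_left hE2 hββ₀.le
      rw [hmulrpow]
      linarith [h1]
    have h4 : (β₀ * Gf s)^(-α) - B^(-α) ≤ K * (2 * D t₂) :=
      le_trans hE3 (mul_le_mul_of_nonneg_left hBA hK.le)
    have hbr : (I t₂ - I s) * ((β₀ * Gf s)^(-α) - B^(-α)) ≤ (I t₂ - I s) * (K * (2 * D t₂)) :=
      mul_le_mul_of_nonneg_left h4 hΔI
    linarith [hE1, hmul, hbr, hu2s]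
  -- E5 : lower bound on D-decrement
  have hDt₂s : D t₂ = D s * Real.exp (-(2*K*(I t₂ - I s))) := by
    rw [hDr, hDr, mul_assoc (u t₁ / 2), ← Real.exp_add]
    congr 2
    ring
  have hexpineq : 2*K*(I t₂ - I s) * Real.exp (-(2*K*(I t₂ - I s)))
      ≤ 1 - Real.exp (-(2*K*(I t₂ - I s))) := by
    have h1 := Real.add_one_le_exp (2*K*(I t₂ - I s))
    have h2 : Real.exp (2*K*(I t₂ - I s)) * Real.exp (-(2*K*(I t₂ - I s))) = 1 := by
      rw [← Real.exp_add]; simp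
    have h3 : (2*K*(I t₂ - I s) + 1) * Real.exp (-(2*K*(I t₂ - I s)))
        ≤ Real.exp (2*K*(I t₂ - I s)) * Real.exp (-(2*K*(I t₂ - I s))) :=
      mul_le_mul_of_nonneg_right (by linarith [h1]) (Real.exp_pos _).le
    rw [h2] at h3
    have h4 : (2*K*(I t₂ - I s) + 1) * Real.exp (-(2*K*(I t₂ - I s)))
        = 2*K*(I t₂ - I s) * Real.exp (-(2*K*(I t₂ - I s)))
          + Real.exp (-(2*K*(I t₂ - I s))) := by ring
    linarith [h3, h4]
  have hE5 : D s - D t₂ ≥ 2*K*(I t₂ - I s) * D t₂ := by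
    have hDs : 0 < D s := hDpos s
    have h3 : D s * (2*K*(I t₂ - I s) * Real.exp (-(2*K*(I t₂ - I s))))
        ≤ D s * (1 - Real.exp (-(2*K*(I t₂ - I s)))) :=
      mul_le_mul_of_nonneg_left hexpineq hDs.le
    rw [hDt₂s]
    linarith [h3]
  -- final contradiction
  have h0 : u t₂ - D t₂ = 0 := by
    rw [hwr] at hwt₂; linarith
  have hwsu : 0 < u s - D s := by
    rw [hwr] at hws; linarith
  linarith [hE4, hE5, h0, hwsu]
end
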